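/- Let F be a set functor and Λ a relax extension of F that preserves composition with subidentities. Suppose that Λr_n · … · Λr_1 ≤ 1_{FX} for every set X and every composable sequence of relations r_1, …, r_n such that r_n · … · r_1 ≤ 1_X and img(r_{i-1}) = dom(r_i) for i = 2, …, n. Then the laxification Λ̂ of Λ satisfies Λ̂1_X = 1_{FX} for every set X. -/

import Mathlib

open CategoryTheory Function

universe u

/-- Applicative composition of relations: `relComp s r = s · r`. -/
def relComp {X Y Z : Type u} (s : Y → Z → Prop) (r : X → Y → Prop) : X → Z → Prop :=
  fun x z => ∃ y, r x y ∧ s y z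

/-- Converse of a relation. -/
def relConv {X Y : Type u} (r : X → Y → Prop) : Y → X → Prop := fun y x => r x y

/-- Graph relation of a function. -/
def fgraph {X Y : Type u} (f : X → Y) : X → Y → Prop := fun x y => f x = y

/-- An `F`-relator: a monotone assignment of relations `F X ⇸ F Y` to relations `X ⇸ Y`. -/
structure Relator (F : Type u ⥤ Type u) : Type (u + 1) where
  map : ∀ {X Y : Type u}, (X → Y → Prop) → (F.obj X → F.obj Y → Prop)
  mono : ∀ {X Y : Type u} {r s : X → Y → Prop}, (∀ x y, r x y → s x y) →
    ∀ u v, map r u v → map s u v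

/-- `f` is a coalgebra homomorphism from `(X, α)` to `(Y, β)`. -/
def IsCoalgHom (F : Type u ⥤ Type u) {X Y : Type u} (α : X → F.obj X) (β : Y → F.obj Y)
    (f : X → Y) : Prop :=
  ∀ x, β (f x) = F.map (TypeCat.ofHom f) (α x)

/-- Behavioural equivalence of states. -/
def BehEq (F : Type u ⥤ Type u) {X Y : Type u} (α : X → F.obj X) (β : Y → F.obj Y)
    (x : X) (y : Y) : Prop :=
  ∃ (Z : Type u) (γ : Z → F.obj Z) (f : X → Z) (g : Y → Z),
    IsCoalgHom F α γ f ∧ IsCoalgHom F β γ g ∧ f x = g y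

/-- `r` is a `Λ`-simulation from `(X, α)` to `(Y, β)`: `r ≤ β° · Λr · α`. -/
def IsSimulation {F : Type u ⥤ Type u} (Λ : Relator F) {X Y : Type u}
    (α : X → F.obj X) (β : Y → F.obj Y) (r : X → Y → Prop) : Prop :=
  ∀ x y, r x y → Λ.map r (α x) (β y)

/-- `x` and `y` are `Λ`-similar: related by some `Λ`-simulation. -/
def RelSimilar {F : Type u ⥤ Type u} (Λ : Relator F) {X Y : Type u}
    (α : X → F.obj X) (β : Y → F.obj Y) (x : X) (y : Y) : Prop :=
  ∃ r, IsSimulation Λ α β r ∧ r x y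

/-- `Λ` is a relax extension of `F`: `Ff ≤ Λf` and `(Ff)° ≤ Λ(f°)` for all functions `f`. -/
def IsRelaxExtension (F : Type u ⥤ Type u) (Λ : Relator F) : Prop :=
  ∀ {X Y : Type u} (f : X → Y),
    (∀ (u : F.obj X) (v : F.obj Y), F.map (TypeCat.ofHom f) u = v → Λ.map (fgraph f) u v) ∧
    (∀ (v : F.obj Y) (u : F.obj X), F.map (TypeCat.ofHom f) u = v → Λ.map (relConv (fgraph f)) v u)

/-- A subidentity is a relation contained in the identity relation. -/
def IsSubId {X : Type u} (s : X → X → Prop) : Prop := ∀ x x', s x x' → x = x'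

/-- `Λ` preserves composition with subidentities:
`Λ(r · s) = Λr · Λs` and `Λ(s' · r) = Λs' · Λr` for subidentities `s`, `s'`. -/
def PreservesSubIdComp (F : Type u ⥤ Type u) (Λ : Relator F) : Prop :=
  ∀ {X Y : Type u} (r : X → Y → Prop),
    (∀ s : X → X → Prop, IsSubId s →
      ∀ (u : F.obj X) (v : F.obj Y),
        Λ.map (relComp r s) u v ↔ relComp (Λ.map r) (Λ.map s) u v) ∧
    (∀ s' : Y → Y → Prop, IsSubId s' →
      ∀ (u : F.obj X) (v : F.obj Y),
        Λ.map (relComp s' r) u v ↔ relComp (Λ.map s') (Λ.map r) u v)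

/-- `Chain F Λ c C` holds iff there is a composable sequence of relations
`r_1, …, r_n` (`n ≥ 1`) with relational composite `c = r_n · … · r_1` and
`C = Λr_n · … · Λr_1`. -/
inductive Chain (F : Type u ⥤ Type u) (Λ : Relator F) :
    ∀ {X Y : Type u}, (X → Y → Prop) → (F.obj X → F.obj Y → Prop) → Prop
  | single {X Y : Type u} (r : X → Y → Prop) : Chain F Λ r (Λ.map r)
  | cons {X Y Z : Type u} {c : X → Y → Prop} {C : F.obj X → F.obj Y → Prop}
      (h : Chain F Λ c C) (s : Y → Z → Prop) :
      Chain F Λ (relComp s c) (relComp (Λ.map s) C)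

/-- The laxification of `Λ`:
`Λ̂r = ⋁ { Λr_n · … · Λr_1 | r_1, …, r_n composable with r_n · … · r_1 ≤ r }`. -/
def laxif (F : Type u ⥤ Type u) (Λ : Relator F) {X Y : Type u} (r : X → Y → Prop) :
    F.obj X → F.obj Y → Prop :=
  fun u v => ∃ (c : X → Y → Prop) (C : F.obj X → F.obj Y → Prop),
    Chain F Λ c C ∧ (∀ x y, c x y → r x y) ∧ C u v

/-- `AlignedChain F Λ c C img` holds iff there is a composable sequence of relations
`r_1, …, r_n` with `img(r_{i-1}) = dom(r_i)` for `i = 2, …, n`, composite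
`c = r_n · … · r_1`, `C = Λr_n · … · Λr_1`, and `img = img(r_n)`. -/
inductive AlignedChain (F : Type u ⥤ Type u) (Λ : Relator F) :
    ∀ {X Y : Type u}, (X → Y → Prop) → (F.obj X → F.obj Y → Prop) → (Y → Prop) → Prop
  | single {X Y : Type u} (r : X → Y → Prop) :
      AlignedChain F Λ r (Λ.map r) (fun y => ∃ x, r x y)
  | cons {X Y Z : Type u} {c : X → Y → Prop} {C : F.obj X → F.obj Y → Prop}
      {img : Y → Prop} (h : AlignedChain F Λ c C img) (s : Y → Z → Prop)
      (hdom : ∀ y, img y ↔ ∃ z, s y z) :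
      AlignedChain F Λ (relComp s c) (relComp (Λ.map s) C) (fun z => ∃ y, s y z)


/-- The subidentity relation on the subset `P`. -/
def subId {Y : Type u} (P : Y → Prop) : Y → Y → Prop := fun y y' => y = y' ∧ P y

theorem subId_isSubId {Y : Type u} (P : Y → Prop) : IsSubId (subId P) := fun _ _ h => h.1

/-- Key auxiliary lemma. -/
theorem stmt8_aux (F : Type u ⥤ Type u) (Λ : Relator F) (hsub : PreservesSubIdComp F Λ)
    {X Y : Type u} {c : X → Y → Prop} {C : F.obj X → F.obj Y → Prop}
    (hch : Chain F Λ c C) :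
    ∀ (P : Y → Prop) (u : F.obj X) (w a : F.obj Y), C u w → Λ.map (subId P) w a →
    ∃ (c' : X → Y → Prop) (C' : F.obj X → F.obj Y → Prop) (G : Y → Prop),
      AlignedChain F Λ c' C' G ∧ (∀ x y, c' x y → c x y ∧ P y) ∧ (∀ y, G y → P y) ∧
      ∃ e, C' u e ∧ Λ.map (subId G) e a := by
  induction hch with
  | @single Y r =>
    intro P u w a hC hPa
    have hqa : Λ.map (relComp (subId P) r) u a :=
      ((hsub r).2 (subId P) (subId_isSubId P) u a).mpr ⟨w, hC, hPa⟩
    set q : X → Y → Prop := relComp (subId P) r with hq_def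
    set G : Y → Prop := fun y => ∃ x, q x y with hG_def
    have habs : Λ.map (relComp (subId G) q) u a := by
      refine Λ.mono (r := q) (fun x y h => ⟨y, h, rfl, ⟨x, h⟩⟩) u a hqa
    obtain ⟨b, hqb, hGb⟩ := ((hsub q).2 (subId G) (subId_isSubId G) u a).mp habs
    have hGb2 : Λ.map (relComp (subId G) (subId G)) b a := by
      refine Λ.mono (r := subId G) (fun x y h => ⟨x, ⟨rfl, h.2⟩, h⟩) b a hGb
    obtain ⟨e, hbe, hea⟩ := ((hsub (subId G)).2 (subId G) (subId_isSubId G) b a).mp hGb2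
    have hρ : Λ.map (relComp (subId G) q) u e :=
      ((hsub q).2 (subId G) (subId_isSubId G) u e).mpr ⟨b, hqb, hbe⟩
    refine ⟨relComp (subId G) q, Λ.map (relComp (subId G) q),
      fun y => ∃ x, relComp (subId G) q x y, AlignedChain.single _, ?_, ?_, e, hρ, ?_⟩
    · rintro x y ⟨m, ⟨w', hrw', rfl, hPw'⟩, rfl, -⟩
      exact ⟨hrw', hPw'⟩
    · rintro y ⟨x, m, ⟨w', hrw', rfl, hPw'⟩, rfl, -⟩
      exact hPw'
    · refine Λ.mono (r := subId G) (fun y y' h => ⟨h.1, ?_⟩) e a hea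
      obtain ⟨x, hq'⟩ := h.2
      exact ⟨x, y, hq', rfl, ⟨x, hq'⟩⟩
  | @cons W0 Z0 c0 C0 h s ih =>
    intro P' u v' a'' hC hPa
    obtain ⟨w, hCuw, hsw⟩ := hC
    have h1 : Λ.map (relComp (subId P') s) w a'' :=
      ((hsub s).2 (subId P') (subId_isSubId P') w a'').mpr ⟨v', hsw, hPa⟩
    set P : W0 → Prop := fun y => ∃ z, s y z ∧ P' z with hP_def
    have h2 : Λ.map (relComp (relComp (subId P') s) (subId P)) w a'' := by
      refine Λ.mono (r := relComp (subId P') s) (fun y z hy => ⟨y, ⟨rfl, ?_⟩, hy⟩) w a'' h1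
      obtain ⟨m, hsm, rfl, hPm⟩ := hy
      exact ⟨m, hsm, hPm⟩
    obtain ⟨a', hPa', hsa'⟩ :=
      ((hsub (relComp (subId P') s)).1 (subId P) (subId_isSubId P) w a'').mp h2
    obtain ⟨c', C', G, hal, hb, hGP, e, hC'e, hGe⟩ := ih P u w a' hCuw hPa'
    set q : W0 → Z0 → Prop := relComp (relComp (subId P') s) (subId G) with hq_def
    set G' : Z0 → Prop := fun z => ∃ y, q y z with hG'_def
    have hq : Λ.map q e a'' :=
      ((hsub (relComp (subId P') s)).1 (subId G) (subId_isSubId G) e a'').mpr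
        ⟨a', hGe, hsa'⟩
    have habs : Λ.map (relComp (subId G') q) e a'' := by
      refine Λ.mono (r := q) (fun y z hy => ⟨z, hy, rfl, ⟨y, hy⟩⟩) e a'' hq
    obtain ⟨b, hqb, hG'b⟩ := ((hsub q).2 (subId G') (subId_isSubId G') e a'').mp habs
    have hG'b2 : Λ.map (relComp (subId G') (subId G')) b a'' := by
      refine Λ.mono (r := subId G') (fun x y hxy => ⟨x, ⟨rfl, hxy.2⟩, hxy⟩) b a'' hG'b
    obtain ⟨e', hbe', he'a⟩ :=
      ((hsub (subId G')).2 (subId G') (subId_isSubId G') b a'').mp hG'b2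
    have hρ : Λ.map (relComp (subId G') q) e e' :=
      ((hsub q).2 (subId G') (subId_isSubId G') e e').mpr ⟨b, hqb, hbe'⟩
    have hdom : ∀ y, G y ↔ ∃ z, relComp (subId G') q y z := by
      intro y
      constructor
      · intro hGy
        obtain ⟨z, hsz, hP'z⟩ := hGP y hGy
        have hqyz : q y z := ⟨y, ⟨rfl, hGy⟩, z, hsz, rfl, hP'z⟩
        exact ⟨z, z, hqyz, rfl, ⟨y, hqyz⟩⟩
      · rintro ⟨z, m, hqym, -, -⟩
        obtain ⟨k, ⟨rfl, hGk⟩, -⟩ := hqym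
        exact hGk
    refine ⟨relComp (relComp (subId G') q) c',
      relComp (Λ.map (relComp (subId G') q)) C',
      fun z => ∃ y, relComp (subId G') q y z,
      AlignedChain.cons hal _ hdom, ?_, ?_, e', ⟨e, hC'e, hρ⟩, ?_⟩
    · rintro x z ⟨y, hc'xy, m, hqym, rfl, -⟩
      obtain ⟨k, ⟨rfl, -⟩, w'', hsw'', rfl, hP'w''⟩ := hqym
      exact ⟨⟨y, (hb x y hc'xy).1, hsw''⟩, hP'w''⟩
    · rintro z ⟨y, m, hqym, rfl, -⟩
      obtain ⟨k, ⟨rfl, -⟩, w'', hsw'', rfl, hP'w''⟩ := hqym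
      exact hP'w''
    · refine Λ.mono (r := subId G') (fun z z' hz => ⟨hz.1, ?_⟩) e' a'' he'a
      obtain ⟨y, hqyz⟩ := hz.2
      exact ⟨y, z, hqyz, rfl, ⟨y, hqyz⟩⟩

/-- Let `Λ` be a relax extension of `F` preserving composition with
subidentities, and suppose that `Λr_n · … · Λr_1 ≤ 1_{FX}` for every composable
sequence `r_1, …, r_n` with `r_n · … · r_1 ≤ 1_X` and `img(r_{i-1}) = dom(r_i)`.
Then the laxification `Λ̂` of `Λ` satisfies `Λ̂1_X = 1_{FX}` for every set `X`. -/
theorem stmt8 (F : Type u ⥤ Type u) (Λ : Relator F)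
    (hrelax : IsRelaxExtension F Λ) (hsub : PreservesSubIdComp F Λ)
    (H : ∀ (X : Type u) (c : X → X → Prop) (C : F.obj X → F.obj X → Prop)
      (img : X → Prop), AlignedChain F Λ c C img → (∀ x x', c x x' → x = x') →
        ∀ u v, C u v → u = v) :
    ∀ (X : Type u) (u v : F.obj X), laxif F Λ (@Eq X) u v ↔ u = v := by
  intro X u v
  constructor
  · rintro ⟨c, C, hch, hle, hC⟩
    have hid : Λ.map (subId (fun _ : X => True)) v v := by
      have h0 : F.map (TypeCat.ofHom (id : X → X)) v = v := by
        rw [show TypeCat.ofHom (id : X → X) = 𝟙 X from rfl, F.map_id]; rfl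
      exact Λ.mono (fun x y h => ⟨h, trivial⟩) v v ((hrelax (id : X → X)).1 v v h0)
    obtain ⟨c', C', G, hal, hb, hGP, e, hC'e, hGe⟩ :=
      stmt8_aux F Λ hsub hch (fun _ => True) u v v hC hid
    have hdom : ∀ y, G y ↔ ∃ z, subId G y z := by
      intro y
      exact ⟨fun h => ⟨y, rfl, h⟩, fun ⟨z, _, h⟩ => h⟩
    refine H X (relComp (subId G) c') (relComp (Λ.map (subId G)) C') _
      (AlignedChain.cons hal (subId G) hdom) ?_ u v ⟨e, hC'e, hGe⟩
    · rintro x y ⟨m, hc'xm, rfl, -⟩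
      exact hle x m (hb x m hc'xm).1
  · rintro rfl
    refine ⟨fgraph (id : X → X), Λ.map (fgraph (id : X → X)), Chain.single _,
      fun x y h => h, (hrelax (id : X → X)).1 u u
        (by rw [show TypeCat.ofHom (id : X → X) = 𝟙 X from rfl, F.map_id]; rfl)⟩
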